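/- arXiv:2603.28632 — 2 statements merged into one kernel-verified Lean document; each statement's English description precedes it below -/
import Mathlib

section
/- If H is twice differentiable on (0,∞) with H'·H'' ≠ 0 and satisfies Bonnet's third-order equation (1/2)·(H''/H')' + H' - (ν/sinh(νx))²·(H² + H')/H' = 0, then the quantity (H''/(2H') + ν·coth(νx))² + H' + (ν/sinh(νx))²·H²/H' + 2ν·coth(νx)·H is constant in x (Hazzidakis' first integral). -/
open Real

theorem hazzidakis_first_integral (ν : ℝ) (hν : 0 < ν) (H : ℝ → ℝ)
    (hH1 : ∀ x ∈ Set.Ioi (0:ℝ), HasDerivAt H (deriv H x) x)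
    (hH2 : ∀ x ∈ Set.Ioi (0:ℝ), HasDerivAt (deriv H) (deriv (deriv H) x) x)
    (hH3 : ∀ x ∈ Set.Ioi (0:ℝ),
      HasDerivAt (fun y => deriv (deriv H) y / deriv H y)
        (deriv (fun y => deriv (deriv H) y / deriv H y) x) x)
    (hH' : ∀ x ∈ Set.Ioi (0:ℝ), deriv H x ≠ 0)
    (hH'' : ∀ x ∈ Set.Ioi (0:ℝ), deriv (deriv H) x ≠ 0)
    (hBonnet : ∀ x ∈ Set.Ioi (0:ℝ),
      (1/2) * deriv (fun y => deriv (deriv H) y / deriv H y) x + deriv H x -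
        (ν / Real.sinh (ν * x)) ^ 2 * ((H x) ^ 2 + deriv H x) / deriv H x = 0) :
    ∃ c : ℝ, ∀ x ∈ Set.Ioi (0:ℝ),
      (deriv (deriv H) x / (2 * deriv H x) +
          ν * (Real.cosh (ν * x) / Real.sinh (ν * x))) ^ 2 +
        deriv H x + (ν / Real.sinh (ν * x)) ^ 2 * (H x) ^ 2 / deriv H x +
        2 * ν * (Real.cosh (ν * x) / Real.sinh (ν * x)) * H x = c := by
  set F : ℝ → ℝ := fun x =>
      (deriv (deriv H) x / (2 * deriv H x) +
          ν * (Real.cosh (ν * x) / Real.sinh (ν * x))) ^ 2 +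
        deriv H x + (ν / Real.sinh (ν * x)) ^ 2 * (H x) ^ 2 / deriv H x +
        2 * ν * (Real.cosh (ν * x) / Real.sinh (ν * x)) * H x with hFdef
  have key : ∀ x ∈ Set.Ioi (0:ℝ), HasDerivAt F 0 x := by
    intro x hx
    have hxpos : (0:ℝ) < x := hx
    have hνx : 0 < ν * x := mul_pos hν hxpos
    have hs : Real.sinh (ν * x) ≠ 0 := ne_of_gt (Real.sinh_pos_iff.mpr hνx)
    have hu : deriv H x ≠ 0 := hH' x hx
    have hcs : Real.cosh (ν * x) ^ 2 = Real.sinh (ν * x) ^ 2 + 1 := Real.cosh_sq (ν * x)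
    have hlin : HasDerivAt (fun y : ℝ => ν * y) ν x := by
      simpa using (hasDerivAt_id x).const_mul ν
    have hsinh : HasDerivAt (fun y => Real.sinh (ν * y)) (Real.cosh (ν * x) * ν) x :=
      (Real.hasDerivAt_sinh (ν * x)).comp x hlin
    have hcosh : HasDerivAt (fun y => Real.cosh (ν * y)) (Real.sinh (ν * x) * ν) x :=
      (Real.hasDerivAt_cosh (ν * x)).comp x hlin
    have hcoth : HasDerivAt (fun y => Real.cosh (ν * y) / Real.sinh (ν * y))
        (-ν / Real.sinh (ν * x) ^ 2) x := by
      have h : HasDerivAt (fun y => Real.cosh (ν * y) / Real.sinh (ν * y)) _ x := hcosh.div hsinh hs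
      convert h using 1
      rw [div_eq_div_iff (by positivity) (by positivity)]
      linear_combination (ν * Real.sinh (ν * x) ^ 2) * hcs
    have hnus : HasDerivAt (fun y => ν / Real.sinh (ν * y))
        ((0 * Real.sinh (ν * x) - ν * (Real.cosh (ν * x) * ν)) / Real.sinh (ν * x) ^ 2) x :=
      (hasDerivAt_const x ν).div hsinh hs
    have hg := hH3 x hx
    set g' := deriv (fun y => deriv (deriv H) y / deriv H y) x with hg'def
    set u := deriv H x with hudef
    set v := deriv (deriv H) x with hvdef
    set s := Real.sinh (ν * x) with hsdef
    set c := Real.cosh (ν * x) with hcdef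
    -- the Bonnet equation, cleared of denominators
    have hB : g' * u * s ^ 2 + 2 * u ^ 2 * s ^ 2 = 2 * ν ^ 2 * ((H x) ^ 2 + u) := by
      have hB0 := hBonnet x hx
      rw [← hg'def, ← hudef, ← hsdef] at hB0
      field_simp at hB0
      linarith [hB0]
    -- assemble the derivative of F
    have hA : HasDerivAt (fun y => deriv (deriv H) y / deriv H y / 2 +
        ν * (Real.cosh (ν * y) / Real.sinh (ν * y))) (g' / 2 + ν * (-ν / s ^ 2)) x :=
      (hg.div_const 2).add (hcoth.const_mul ν)
    have hT1 : HasDerivAt (fun y => (deriv (deriv H) y / deriv H y / 2 +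
        ν * (Real.cosh (ν * y) / Real.sinh (ν * y))) ^ 2)
        (2 * (v / u / 2 + ν * (c / s)) ^ 1 * (g' / 2 + ν * (-ν / s ^ 2))) x := by
      exact (hA.pow 2).congr_deriv (by simp [hudef, hvdef, hcdef, hsdef])
    have hT3 := ((hnus.pow 2).mul ((hH1 x hx).pow 2)).div (hH2 x hx) hu
    have hT4 := (hcoth.const_mul (2 * ν)).mul (hH1 x hx)
    have hFeq : F = fun y => (deriv (deriv H) y / deriv H y / 2 +
          ν * (Real.cosh (ν * y) / Real.sinh (ν * y))) ^ 2 +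
        deriv H y + (ν / Real.sinh (ν * y)) ^ 2 * (H y) ^ 2 / deriv H y +
        2 * ν * (Real.cosh (ν * y) / Real.sinh (ν * y)) * H y := by
      funext y
      rw [hFdef]
      ring_nf
    have hD := ((hT1.add (hH2 x hx)).add hT3).add hT4
    rw [hFeq]
    refine hD.congr_deriv ?_
    have hg'val : g' = 2 * ν ^ 2 * ((H x) ^ 2 + u) / (u * s ^ 2) - 2 * u := by
      field_simp
      linarith [hB]
    rw [hg'val]
    simp only [Pi.pow_apply, Pi.mul_apply, ← hsdef, ← hudef, ← hcdef, ← hvdef]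
    field_simp
    ring_nf
    field_simp
    ring
  -- F is constant on (0,∞) by composing with exp
  have hG : ∀ t : ℝ, HasDerivAt (fun t => F (Real.exp t)) 0 t := by
    intro t
    have := (key (Real.exp t) (Set.mem_Ioi.mpr (Real.exp_pos t))).comp t (Real.hasDerivAt_exp t)
    simpa [Function.comp_def] using this
  have hconst : ∀ t : ℝ, F (Real.exp t) = F (Real.exp 0) := by
    intro t
    exact is_const_of_deriv_eq_zero (fun t => (hG t).differentiableAt)
      (fun t => (hG t).deriv) t 0
  refine ⟨F 1, fun x hx => ?_⟩
  have h1 := hconst (Real.log x)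
  rw [Real.exp_log hx, Real.exp_zero] at h1
  exact h1
end

section
/- For 0 < θ < φ < 1, the Wiener–Hopf factor F_{θ,φ}(z) = Γ((1+θ)/2 - z)·Γ((1-θ)/2 - z)/(Γ((1+φ)/2 - z)·Γ((1-φ)/2 - z)) satisfies F_{θ,φ}(iu/2)·F_{θ,φ}(-iu/2) = (cosh(πu) + cos(πφ))/(cosh(πu) + cos(πθ)) for all real u, and 1/F_{θ,φ}(z) = F_{φ,θ}(-(-z)) i.e. 1/F_{θ,φ}(z) = F_{φ,θ}(z) with θ and φ exchanged. -/
open Complex Real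

noncomputable def WHfactor (θ φ : ℝ) (z : ℂ) : ℂ :=
  Complex.Gamma ((1 + θ) / 2 - z) * Complex.Gamma ((1 - θ) / 2 - z) /
    (Complex.Gamma ((1 + φ) / 2 - z) * Complex.Gamma ((1 - φ) / 2 - z))

lemma WH_cos_pos (t : ℝ) (ht0 : 0 < t) (ht1 : t < 1) (u : ℝ) :
    0 < Real.cosh (Real.pi * u) + Real.cos (Real.pi * t) := by
  have h1 : Real.cos Real.pi < Real.cos (Real.pi * t) := by
    apply Real.cos_lt_cos_of_nonneg_of_le_pi (by positivity) le_rfl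
    nlinarith [Real.pi_pos]
  have h2 : (1 : ℝ) ≤ Real.cosh (Real.pi * u) := Real.one_le_cosh _
  rw [Real.cos_pi] at h1
  linarith

lemma gamma_pair (t : ℝ) (u : ℝ) :
    (Complex.Gamma ((1 + (t : ℂ)) / 2 - Complex.I * u / 2) *
        Complex.Gamma ((1 - (t : ℂ)) / 2 - Complex.I * u / 2)) *
      (Complex.Gamma ((1 + (t : ℂ)) / 2 - -(Complex.I * u / 2)) *
        Complex.Gamma ((1 - (t : ℂ)) / 2 - -(Complex.I * u / 2))) =
      2 * (Real.pi : ℂ) ^ 2 /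
        ((Real.cosh (Real.pi * u) : ℂ) + (Real.cos (Real.pi * t) : ℂ)) := by
  set A : ℂ := (1 + (t : ℂ)) / 2 - Complex.I * u / 2 with hA
  set B : ℂ := (1 - (t : ℂ)) / 2 - Complex.I * u / 2 with hB
  have e1 : (1 + (t : ℂ)) / 2 - -(Complex.I * u / 2) = 1 - B := by rw [hB]; ring
  have e2 : (1 - (t : ℂ)) / 2 - -(Complex.I * u / 2) = 1 - A := by rw [hA]; ring
  have hsin : Complex.sin ((Real.pi : ℂ) * A) * Complex.sin ((Real.pi : ℂ) * B) =
      ((Real.cosh (Real.pi * u) : ℂ) + (Real.cos (Real.pi * t) : ℂ)) / 2 := by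
    have h := Complex.cos_sub_cos ((Real.pi : ℂ) * t) ((Real.pi : ℂ) - Real.pi * u * Complex.I)
    have ha : ((Real.pi : ℂ) * t + ((Real.pi : ℂ) - Real.pi * u * Complex.I)) / 2 =
        (Real.pi : ℂ) * A := by rw [hA]; ring
    have hb : ((Real.pi : ℂ) * t - ((Real.pi : ℂ) - Real.pi * u * Complex.I)) / 2 =
        -((Real.pi : ℂ) * B) := by rw [hB]; ring
    rw [ha, hb, Complex.sin_neg, Complex.cos_pi_sub] at h
    have hcosh : Complex.cos ((Real.pi : ℂ) * u * Complex.I) = (Real.cosh (Real.pi * u) : ℂ) := by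
      rw [Complex.cos_mul_I]
      push_cast
      ring_nf
    rw [hcosh] at h
    have hcost : Complex.cos ((Real.pi : ℂ) * t) = (Real.cos (Real.pi * t) : ℂ) := by
      push_cast; ring_nf
    rw [hcost] at h
    linear_combination -h / 2
  calc (Complex.Gamma A * Complex.Gamma B) *
        (Complex.Gamma ((1 + (t : ℂ)) / 2 - -(Complex.I * u / 2)) *
          Complex.Gamma ((1 - (t : ℂ)) / 2 - -(Complex.I * u / 2)))
      = (Complex.Gamma A * Complex.Gamma (1 - A)) *
        (Complex.Gamma B * Complex.Gamma (1 - B)) := by rw [e1, e2]; ring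
    _ = ((Real.pi : ℂ) / Complex.sin ((Real.pi : ℂ) * A)) *
        ((Real.pi : ℂ) / Complex.sin ((Real.pi : ℂ) * B)) := by
        rw [Complex.Gamma_mul_Gamma_one_sub, Complex.Gamma_mul_Gamma_one_sub]
    _ = (Real.pi : ℂ) ^ 2 /
        (Complex.sin ((Real.pi : ℂ) * A) * Complex.sin ((Real.pi : ℂ) * B)) := by
        rw [div_mul_div_comm]; ring_nf
    _ = 2 * (Real.pi : ℂ) ^ 2 /
        ((Real.cosh (Real.pi * u) : ℂ) + (Real.cos (Real.pi * t) : ℂ)) := by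
        rw [hsin, div_div_eq_mul_div]; ring

theorem wiener_hopf_factorization (θ φ : ℝ) (h : 0 < θ ∧ θ < φ ∧ φ < 1) :
    (∀ u : ℝ,
      WHfactor θ φ (Complex.I * u / 2) * WHfactor θ φ (-(Complex.I * u / 2)) =
        ((Real.cosh (Real.pi * u) + Real.cos (Real.pi * φ)) /
          (Real.cosh (Real.pi * u) + Real.cos (Real.pi * θ)) : ℝ)) ∧
    (∀ z : ℂ, 1 / WHfactor θ φ z = WHfactor φ θ z) := by
  obtain ⟨h0, h1, h2⟩ := h
  constructor
  · intro u
    have hθ := WH_cos_pos θ h0 (h1.trans h2) u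
    have hφ := WH_cos_pos φ (h0.trans h1) h2 u
    unfold WHfactor
    rw [div_mul_div_comm, gamma_pair θ u, gamma_pair φ u]
    have hπ : (Real.pi : ℂ) ≠ 0 := by
      exact_mod_cast Real.pi_ne_zero
    have hθ' : ((Real.cosh (Real.pi * u) : ℂ) + (Real.cos (Real.pi * θ) : ℂ)) ≠ 0 := by
      exact_mod_cast hθ.ne'
    have hφ' : ((Real.cosh (Real.pi * u) : ℂ) + (Real.cos (Real.pi * φ) : ℂ)) ≠ 0 := by
      exact_mod_cast hφ.ne'
    rw [Complex.ofReal_div, Complex.ofReal_add, Complex.ofReal_add]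
    field_simp
  · intro z
    unfold WHfactor
    rw [one_div_div]
end
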